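/- Let (F₁,F₂,R₃) be an attack splitting of a BSAF F, E₁ ⊆ A₁, F₂* = mod^{E₁}_{R₃ᶜ}(F₂^{E₁}) the modification of the R-reduct. If E₁ ∈ adm(F₁) and E₂ ∈ adm(F₂*), then E₁ ∪ E₂ is conflict-free in F. Conversely, if E is conflict-free in F, then E ∩ A₁ is conflict-free in F₁ and E ∩ A₂ is conflict-free in F₂^{E₁}. -/
import Mathlib


variable {α : Type*}

/-- A bipolar set-argumentation framework: arguments `A`, collective attacks `R`,
collective supports `S`. -/
structure BSAF (α : Type*) where
  A : Set α
  R : Set (Set α × α)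
  S : Set (Set α × α)

namespace BSAF

/-- Membership in the least superset of `E` that is closed under the supports of `F`. -/
inductive InCl (F : BSAF α) (E : Set α) : α → Prop
  | base {a : α} : a ∈ E → InCl F E a
  | step {T : Set α} {h : α} : (T, h) ∈ F.S → (∀ t ∈ T, InCl F E t) → InCl F E h

/-- The closure of `E` under the supports of `F`. -/
def cl (F : BSAF α) (E : Set α) : Set α := {a | F.InCl E a}

/-- `E` is closed if its closure equals itself. -/
def Closed (F : BSAF α) (E : Set α) : Prop := F.cl E = E

/-- `E` attacks the set `D`. -/
def Attacks (F : BSAF α) (E D : Set α) : Prop :=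
  ∃ T h, (T, h) ∈ F.R ∧ T ⊆ E ∧ h ∈ D

/-- `E` is conflict-free: it does not attack itself. -/
def ConflictFree (F : BSAF α) (E : Set α) : Prop :=
  ¬ ∃ T h, (T, h) ∈ F.R ∧ T ⊆ E ∧ h ∈ E

/-- `E` defends `a`: every closed attacker of `a` is attacked by `E`. -/
def Defends (F : BSAF α) (E : Set α) (a : α) : Prop :=
  ∀ D : Set α, D ⊆ F.A → F.Closed D → (∃ T, (T, a) ∈ F.R ∧ T ⊆ D) → F.Attacks E D

/-- `E` is admissible: conflict-free, closed, and defends each of its members. -/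
def Admissible (F : BSAF α) (E : Set α) : Prop :=
  E ⊆ F.A ∧ F.ConflictFree E ∧ F.Closed E ∧ ∀ a ∈ E, F.Defends E a

/-- `E` is complete: admissible and contains every argument it defends. -/
def Complete (F : BSAF α) (E : Set α) : Prop :=
  F.Admissible E ∧ ∀ a ∈ F.A, F.Defends E a → a ∈ E

/-- Grounded: ⊆-minimal complete. -/
def Grounded (F : BSAF α) (E : Set α) : Prop :=
  F.Complete E ∧ ∀ E', F.Complete E' → E' ⊆ E → E' = E

/-- Preferred: ⊆-maximal admissible. -/
def Preferred (F : BSAF α) (E : Set α) : Prop :=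
  F.Admissible E ∧ ∀ E', F.Admissible E' → E ⊆ E' → E' = E

/-- Stable: admissible and attacks every outside argument. -/
def Stable (F : BSAF α) (E : Set α) : Prop :=
  F.Admissible E ∧ ∀ x ∈ F.A \ E, ∃ T, (T, x) ∈ F.R ∧ T ⊆ E

end BSAF
namespace BSAF

/-- All links of `G` stay within its argument set. -/
def WithinA (G : BSAF α) : Prop :=
  (∀ p ∈ G.R, p.1 ⊆ G.A ∧ p.2 ∈ G.A) ∧ (∀ p ∈ G.S, p.1 ⊆ G.A ∧ p.2 ∈ G.A)

/-- `(F₁, F₂, R₃)` is an attack splitting of `F`. -/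
def IsAttackSplitting (F F₁ F₂ : BSAF α) (R₃ : Set (Set α × α)) : Prop :=
  F₁.WithinA ∧ F₂.WithinA ∧
  F₁.A ∩ F₂.A = ∅ ∧ F.A = F₁.A ∪ F₂.A ∧
  F.S = F₁.S ∪ F₂.S ∧
  F.R = F₁.R ∪ F₂.R ∪ R₃ ∧
  ∀ p ∈ R₃, (p.1 ∩ F₁.A).Nonempty ∧ p.1 ⊆ F.A ∧ p.2 ∈ F₂.A

/-- The closed negative links `R₃ᶜ = {(cl(T), h) | (T, h) ∈ R₃}`. -/
def closedLinks (F : BSAF α) (R₃ : Set (Set α × α)) : Set (Set α × α) :=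
  {p | ∃ T h, (T, h) ∈ R₃ ∧ p = (F.cl T, h)}

/-- The arguments attacked by `E` via the attack relation `Rs`. -/
def attackedBy (Rs : Set (Set α × α)) (E : Set α) : Set α :=
  {a | ∃ T, (T, a) ∈ Rs ∧ T ⊆ E}

/-- The `(E₁, R₃ᶜ)`-reduct of `F₂`. -/
def Rreduct (F F₁ F₂ : BSAF α) (R₃ : Set (Set α × α)) (E₁ : Set α) : BSAF α where
  A := F₂.A
  R := F₂.R ∪ {p | ∃ T h, (T, h) ∈ F.closedLinks R₃ ∧
        T ∩ attackedBy (F₁.R ∪ F.closedLinks R₃) E₁ = ∅ ∧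
        T ∩ F₁.A ⊆ E₁ ∧ p = (T ∩ F₂.A, h)}
  S := F₂.S

/-- The undecided links in `R₃ᶜ` w.r.t. `E₁`. -/
def undecidedLinks (F F₁ : BSAF α) (R₃ : Set (Set α × α)) (E₁ : Set α) : Set (Set α × α) :=
  {p | p ∈ F.closedLinks R₃ ∧
    p.1 ∩ attackedBy (F₁.R ∪ F.closedLinks R₃) E₁ = ∅ ∧ ¬ p.1 ∩ F₁.A ⊆ E₁}

/-- The modification `F₂* = mod^{E₁}_{R₃ᶜ}(F₂^{E₁})`, with fresh self-attacker `s₀`. -/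
def modification (F F₁ F₂ : BSAF α) (R₃ : Set (Set α × α)) (E₁ : Set α) (s₀ : α) : BSAF α where
  A := F₂.A ∪ {s₀}
  R := (F.Rreduct F₁ F₂ R₃ E₁).R ∪ {({s₀}, s₀)} ∪
       {p | ∃ T h, (T, h) ∈ F.undecidedLinks F₁ R₃ E₁ ∧ p = ((T ∩ F₂.A) ∪ {s₀}, h)}
  S := F₂.S

end BSAF

/-- Conflict-freeness lemma for attack splittings. -/
theorem BSAF.attackSplitting_conflictFree (F F₁ F₂ : BSAF α) (R₃ : Set (Set α × α))
    (hsplit : F.IsAttackSplitting F₁ F₂ R₃) (hfin : F.A.Finite)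
    (s₀ : α) (hs₀ : s₀ ∉ F.A) :
    (∀ E₁ E₂ : Set α, F₁.Admissible E₁ →
      (F.modification F₁ F₂ R₃ E₁ s₀).Admissible E₂ →
      F.ConflictFree (E₁ ∪ E₂)) ∧
    (∀ E : Set α, E ⊆ F.A → F.ConflictFree E →
      F₁.ConflictFree (E ∩ F₁.A) ∧
      (F.Rreduct F₁ F₂ R₃ (E ∩ F₁.A)).ConflictFree (E ∩ F₂.A)) := by

  obtain ⟨hW1, hW2, hdisj, hA, hS, hR, hR3⟩ := hsplit
  have hdisj' : ∀ x, x ∈ F₁.A → x ∈ F₂.A → False := fun x h1 h2 =>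
    Set.eq_empty_iff_forall_notMem.mp hdisj x ⟨h1, h2⟩
  constructor
  · intro E₁ E₂ h1 h2
    obtain ⟨h1A, h1CF, h1Cl, -⟩ := h1
    obtain ⟨h2A, h2CF, h2Cl, -⟩ := h2
    have hs0mem : (({s₀} : Set α), s₀) ∈ (F.modification F₁ F₂ R₃ E₁ s₀).R :=
      Or.inl (Or.inr rfl)
    have hs₀E₂ : s₀ ∉ E₂ := fun hm =>
      h2CF ⟨{s₀}, s₀, hs0mem, by simpa using hm, hm⟩
    have hE₂A : E₂ ⊆ F₂.A := by
      intro x hx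
      rcases h2A hx with h | h
      · exact h
      · simp only [Set.mem_singleton_iff] at h
        subst h; exact absurd hx hs₀E₂
    -- closure lemma
    have hclosed : ∀ a, F.InCl (E₁ ∪ E₂) a → a ∈ E₁ ∪ E₂ := by
      intro a ha
      induction ha with
      | base h => exact h
      | @step T' h' hS' hT ih =>
        rw [hS] at hS'
        rcases hS' with hS' | hS'
        · have hT1 : T' ⊆ E₁ := by
            intro t ht
            rcases ih t ht with h | h
            · exact h
            · exact ((hdisj' t ((hW1.2 _ hS').1 ht) (hE₂A h))).elim
          have hmem : F₁.InCl E₁ h' := .step hS' (fun t ht => .base (hT1 ht))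
          have hmem' : h' ∈ F₁.cl E₁ := hmem
          rw [h1Cl] at hmem'
          exact Or.inl hmem'
        · have hT2 : T' ⊆ E₂ := by
            intro t ht
            rcases ih t ht with h | h
            · exact ((hdisj' t (h1A h) ((hW2.2 _ hS').1 ht))).elim
            · exact h
          have hmem : (F.modification F₁ F₂ R₃ E₁ s₀).InCl E₂ h' :=
            .step (show (T', h') ∈ (F.modification F₁ F₂ R₃ E₁ s₀).S from hS')
              (fun t ht => .base (hT2 ht))
          have hmem' : h' ∈ (F.modification F₁ F₂ R₃ E₁ s₀).cl E₂ := hmem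
          rw [h2Cl] at hmem'
          exact Or.inr hmem'
    have hL0 : ∀ b ∈ E₁, b ∉ attackedBy (F₁.R ∪ F.closedLinks R₃) E₁ := by
      rintro b hb ⟨T', hT'mem, hT'sub⟩
      rcases hT'mem with hm | hm
      · exact h1CF ⟨T', b, hm, hT'sub, hb⟩
      · obtain ⟨T₁, h₁, hT₁, heq⟩ := hm
        injection heq with e1 e2
        subst e2
        exact hdisj' b (h1A hb) (hR3 _ hT₁).2.2
    have hL : ∀ b ∈ E₁ ∪ E₂, b ∉ attackedBy (F₁.R ∪ F.closedLinks R₃) E₁ := by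
      rintro b hb ⟨T', hT'mem, hT'sub⟩
      rcases hT'mem with hm | hm
      · have hbA : b ∈ F₁.A := (hW1.1 _ hm).2
        have hbE₁ : b ∈ E₁ := hb.elim id (fun h => ((hdisj' b hbA (hE₂A h))).elim)
        exact h1CF ⟨T', b, hm, hT'sub, hbE₁⟩
      · obtain ⟨T₁, h₁, hT₁, heq⟩ := hm
        injection heq with e1 e2
        subst e1; subst e2
        have hbA : b ∈ F₂.A := (hR3 _ hT₁).2.2
        have hbE₂ : b ∈ E₂ := hb.elim (fun h => ((hdisj' b (h1A h) hbA)).elim) id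
        have hempty : F.cl T₁ ∩ attackedBy (F₁.R ∪ F.closedLinks R₃) E₁ = ∅ :=
          Set.eq_empty_iff_forall_notMem.mpr
            (fun x hx => hL0 x (hT'sub hx.1) hx.2)
        have hmemred : (F.cl T₁ ∩ F₂.A, b) ∈ (F.Rreduct F₁ F₂ R₃ E₁).R :=
          Or.inr ⟨F.cl T₁, b, ⟨T₁, b, hT₁, rfl⟩, hempty,
            fun x hx => hT'sub hx.1, rfl⟩
        refine h2CF ⟨F.cl T₁ ∩ F₂.A, b, Or.inl (Or.inl hmemred), ?_, hbE₂⟩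
        intro x hx
        exact ((hdisj' x (h1A (hT'sub hx.1)) hx.2)).elim
    rintro ⟨T, h, hTR, hTsub, hhE⟩
    rw [hR] at hTR
    rcases hTR with (hm | hm) | hm
    · have hh1 : h ∈ E₁ := hhE.elim id
        (fun h' => ((hdisj' h (hW1.1 _ hm).2 (hE₂A h'))).elim)
      refine h1CF ⟨T, h, hm, ?_, hh1⟩
      intro t ht
      exact (hTsub ht).elim id
        (fun h' => ((hdisj' t ((hW1.1 _ hm).1 ht) (hE₂A h'))).elim)
    · have hh2 : h ∈ E₂ := hhE.elim
        (fun h' => ((hdisj' h (h1A h') (hW2.1 _ hm).2)).elim) id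
      refine h2CF ⟨T, h, Or.inl (Or.inl (Or.inl hm)), ?_, hh2⟩
      intro t ht
      exact (hTsub ht).elim
        (fun h' => ((hdisj' t (h1A h') ((hW2.1 _ hm).1 ht))).elim) id
    · have hhA : h ∈ F₂.A := (hR3 _ hm).2.2
      have hhE₂ : h ∈ E₂ := hhE.elim (fun h' => ((hdisj' h (h1A h') hhA)).elim) id
      have hmono : ∀ x, F.InCl T x → F.InCl (E₁ ∪ E₂) x := by
        intro x hx
        induction hx with
        | base hxT => exact .base (hTsub hxT)
        | step hs ht ih => exact .step hs ih
      have hclsub : F.cl T ⊆ E₁ ∪ E₂ := fun x hx => hclosed x (hmono x hx)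
      have hempty : F.cl T ∩ attackedBy (F₁.R ∪ F.closedLinks R₃) E₁ = ∅ :=
        Set.eq_empty_iff_forall_notMem.mpr
          (fun x hx => hL x (hclsub hx.1) hx.2)
      have hsub1 : F.cl T ∩ F₁.A ⊆ E₁ := by
        intro x hx
        exact (hclsub hx.1).elim id
          (fun h' => ((hdisj' x hx.2 (hE₂A h'))).elim)
      have hmemred : (F.cl T ∩ F₂.A, h) ∈ (F.Rreduct F₁ F₂ R₃ E₁).R :=
        Or.inr ⟨F.cl T, h, ⟨T, h, hm, rfl⟩, hempty, hsub1, rfl⟩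
      refine h2CF ⟨F.cl T ∩ F₂.A, h, Or.inl (Or.inl hmemred), ?_, hhE₂⟩
      intro x hx
      exact (hclsub hx.1).elim
        (fun h' => ((hdisj' x (h1A h') hx.2)).elim) id
  · intro E hEA hECF
    have hclA : ∀ T : Set α, T ⊆ F.A → ∀ x, F.InCl T x → x ∈ F.A := by
      intro T hT x hx
      induction hx with
      | base h => exact hT h
      | step hs ht ih =>
        rw [hS] at hs
        rw [hA]
        rcases hs with hs | hs
        · exact Or.inl (hW1.2 _ hs).2
        · exact Or.inr (hW2.2 _ hs).2
    constructor
    · rintro ⟨T, h, hm, hsub, hh⟩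
      exact hECF ⟨T, h, by rw [hR]; exact Or.inl (Or.inl hm),
        fun t ht => (hsub ht).1, hh.1⟩
    · rintro ⟨T, h, hm, hsub, hh⟩
      rcases hm with hm | hm
      · exact hECF ⟨T, h, by rw [hR]; exact Or.inl (Or.inr hm),
          fun t ht => (hsub ht).1, hh.1⟩
      · obtain ⟨Tc, hc, hcl, hemp, hsub1, heq⟩ := hm
        obtain ⟨T₁, h₁, hT₁, heq2⟩ := hcl
        injection heq with e1 e2
        injection heq2 with e3 e4
        subst e1; subst e2; subst e3; subst e4
        have hTc_sub : F.cl T₁ ⊆ E := by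
          intro x hx
          have hxA : x ∈ F.A := hclA T₁ (hR3 _ hT₁).2.1 x hx
          rw [hA] at hxA
          rcases hxA with h' | h'
          · exact (hsub1 ⟨hx, h'⟩).1
          · exact (hsub ⟨hx, h'⟩).1
        have hT₁E : T₁ ⊆ E := fun t ht => hTc_sub (show F.InCl T₁ t from .base ht)
        exact hECF ⟨T₁, h, by rw [hR]; exact Or.inr hT₁, hT₁E, hh.1⟩
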